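/- For x ∈ [0,π], μ, ε ∈ {±1}, define R_x = √(25/16 + √2·cos x) and the sequence f(2n) = (1 + ε/4 − εμR_x)sin(nx) + (1/√2)sin((n+1)x), f(2n+1) = (μR_x + 1/4 − ε)sin((n+1)x) − (ε/√2)sin(nx) for n ≥ 0, extended by f(−m−1) = ε f(m). Then f satisfies the eigenvalue equations pointwise: for even m ≥ 0, f(m) − (1/2)f(m−1) − (1/(2√2))f(m+1) = λ f(m), and for odd m ≥ 0, (3/4)f(m) − (1/(2√2))f(m−1) − (1/2)f(m+1) = λ f(m), where λ = 7/8 − (μ/2)R_x. -/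

import Mathlib

/-- `R_x = √(25/16 + √2 cos x)`. -/
noncomputable def Rx (x : ℝ) : ℝ := Real.sqrt (25/16 + Real.sqrt 2 * Real.cos x)

open Classical in
/-- The generalized eigenfunction on nonnegative arguments:
`f(2n) = (1+ε/4-εμR)sin(nx) + (1/√2)sin((n+1)x)`,
`f(2n+1) = (μR+1/4-ε)sin((n+1)x) - (ε/√2)sin(nx)`. -/
noncomputable def genEigBase (x μ ε : ℝ) (m : ℤ) : ℝ :=
  if Even m then
    (1 + ε/4 - ε * μ * Rx x) * Real.sin (((m / 2 : ℤ) : ℝ) * x)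
      + (1 / Real.sqrt 2) * Real.sin ((((m / 2 + 1 : ℤ)) : ℝ) * x)
  else
    (μ * Rx x + 1/4 - ε) * Real.sin ((((m - 1) / 2 + 1 : ℤ) : ℝ) * x)
      - (ε / Real.sqrt 2) * Real.sin ((((m - 1) / 2 : ℤ) : ℝ) * x)

open Classical in
/-- The generalized eigenfunction, extended by `f(-m-1) = ε f(m)`. -/
noncomputable def genEig (x μ ε : ℝ) (m : ℤ) : ℝ :=
  if 0 ≤ m then genEigBase x μ ε m else ε * genEigBase x μ ε (-m - 1)

lemma base_even (x μ ε : ℝ) (n : ℤ) :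
    genEigBase x μ ε (2*n) =
      (1 + ε/4 - ε * μ * Rx x) * Real.sin ((n : ℝ) * x)
        + (1 / Real.sqrt 2) * Real.sin (((n : ℝ) + 1) * x) := by
  unfold genEigBase
  rw [if_pos ⟨n, by ring⟩, Int.mul_ediv_cancel_left n two_ne_zero]
  push_cast; ring_nf

lemma base_odd (x μ ε : ℝ) (n : ℤ) :
    genEigBase x μ ε (2*n+1) =
      (μ * Rx x + 1/4 - ε) * Real.sin (((n : ℝ) + 1) * x)
        - (ε / Real.sqrt 2) * Real.sin ((n : ℝ) * x) := by
  unfold genEigBase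
  rw [if_neg (by simp [Int.even_add_one, parity_simps])]
  have h : (2*n+1-1)/2 = n := by omega
  rw [h]; push_cast; ring_nf

lemma key_even (R s t a b ε μ : ℝ) (hs : s^2 = 2) (hs0 : s ≠ 0)
    (hst : s*t = R^2 - 25/16) (hμ : μ^2 = 1) :
    ((1+ε/4-ε*μ*R)*a + (1/s)*b) - (1/2)*((μ*R+1/4-ε)*a - (ε/s)*(2*t*a-b))
      - (1/(2*s))*((μ*R+1/4-ε)*b - (ε/s)*a)
    = (7/8 - μ/2*R)*((1+ε/4-ε*μ*R)*a + (1/s)*b) := by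
  field_simp
  linear_combination (-32*ε*a*s^2*R^2)*hμ + (64*ε*a)*hst + (34*ε*a - 32*ε*a*R^2)*hs

lemma key_odd (R s t a b ε μ : ℝ) (hs : s^2 = 2) (hs0 : s ≠ 0)
    (hst : s*t = R^2 - 25/16) (hμ : μ^2 = 1) :
    (3/4)*((μ*R+1/4-ε)*b - (ε/s)*a) - (1/(2*s))*((1+ε/4-ε*μ*R)*a + (1/s)*b)
      - (1/2)*((1+ε/4-ε*μ*R)*b + (1/s)*(2*t*b-a))
    = (7/8 - μ/2*R)*((μ*R+1/4-ε)*b - (ε/s)*a) := by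
  field_simp
  linear_combination (128*b*s^2*R^2)*hμ + (-256*b)*hst + (128*b*R^2 - 136*b)*hs

lemma genEig_of_nonneg (x μ ε : ℝ) {m : ℤ} (h : 0 ≤ m) :
    genEig x μ ε m = genEigBase x μ ε m := by
  unfold genEig; rw [if_pos h]

lemma genEig_odd' (x μ ε : ℝ) (n : ℤ) (hn : 0 ≤ n) :
    genEig x μ ε (2*n - 1) =
      (μ * Rx x + 1/4 - ε) * Real.sin ((n : ℝ) * x)
        - (ε / Real.sqrt 2) * Real.sin (((n : ℝ) - 1) * x) := by
  rcases eq_or_lt_of_le hn with h | h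
  · have hn0 : n = 0 := h.symm
    subst hn0
    have e0 : (2*(0:ℤ) - 1) = -1 := by norm_num
    rw [e0]
    unfold genEig
    rw [if_neg (by norm_num)]
    have e1 : (-(-1:ℤ) - 1) = 2*0 := by norm_num
    rw [e1, base_even]
    simp [Real.sin_neg]
    ring
  · have e1 : genEig x μ ε (2*n - 1) = genEigBase x μ ε (2*(n-1)+1) := by
      rw [show 2*n - 1 = 2*(n-1)+1 from by ring]
      exact genEig_of_nonneg x μ ε (by omega)
    rw [e1, base_odd]
    push_cast
    ring_nf

lemma trig (x ν : ℝ) :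
    Real.sin ((ν - 1) * x) = 2 * Real.cos x * Real.sin (ν * x) - Real.sin ((ν + 1) * x) := by
  rw [show (ν - 1) * x = ν * x - x from by ring, show (ν + 1) * x = ν * x + x from by ring,
    Real.sin_sub, Real.sin_add]
  ring

theorem generalized_eigenfunctions (x μ ε : ℝ)
    (hx : x ∈ Set.Icc 0 Real.pi) (hμ : μ = 1 ∨ μ = -1) (hε : ε = 1 ∨ ε = -1) :
    ∀ m : ℤ, 0 ≤ m →
      (Even m →
        genEig x μ ε m - (1/2) * genEig x μ ε (m - 1)
            - (1 / (2 * Real.sqrt 2)) * genEig x μ ε (m + 1)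
          = (7/8 - μ / 2 * Rx x) * genEig x μ ε m) ∧
      (Odd m →
        (3/4) * genEig x μ ε m - (1 / (2 * Real.sqrt 2)) * genEig x μ ε (m - 1)
            - (1/2) * genEig x μ ε (m + 1)
          = (7/8 - μ / 2 * Rx x) * genEig x μ ε m) := by
  have hs : (Real.sqrt 2) ^ 2 = 2 := Real.sq_sqrt (by norm_num)
  have hs0 : Real.sqrt 2 ≠ 0 := by positivity
  have hcos : -1 ≤ Real.cos x := Real.neg_one_le_cos x
  have hcos' : Real.cos x ≤ 1 := Real.cos_le_one x
  have hsn : (0:ℝ) ≤ Real.sqrt 2 := Real.sqrt_nonneg 2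
  have hsle : Real.sqrt 2 ≤ 3/2 := by nlinarith
  have harg : (0:ℝ) ≤ 25/16 + Real.sqrt 2 * Real.cos x := by nlinarith
  have hst : Real.sqrt 2 * Real.cos x = (Rx x)^2 - 25/16 := by
    have : (Rx x)^2 = 25/16 + Real.sqrt 2 * Real.cos x := Real.sq_sqrt harg
    linarith
  have hμ2 : μ ^ 2 = 1 := by rcases hμ with h | h <;> rw [h] <;> norm_num
  intro m hm
  constructor
  · intro hme
    obtain ⟨n, hn⟩ := hme
    have hn' : m = 2*n := by omega
    have hn0 : 0 ≤ n := by omega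
    subst hn'
    rw [genEig_of_nonneg x μ ε hm, genEig_of_nonneg x μ ε (show (0:ℤ) ≤ 2*n+1 by omega),
      genEig_odd' x μ ε n hn0, base_even, base_odd, trig x ((n:ℝ))]
    linear_combination key_even (Rx x) (Real.sqrt 2) (Real.cos x)
      (Real.sin ((n:ℝ)*x)) (Real.sin (((n:ℝ)+1)*x)) ε μ hs hs0 hst hμ2
  · intro hmo
    obtain ⟨n, hn⟩ := hmo
    have hn0 : 0 ≤ n := by omega
    subst hn
    rw [genEig_of_nonneg x μ ε hm,
      show 2*n+1-1 = 2*n from by ring, genEig_of_nonneg x μ ε (show (0:ℤ) ≤ 2*n by omega),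
      show 2*n+1+1 = 2*(n+1) from by ring, genEig_of_nonneg x μ ε (show (0:ℤ) ≤ 2*(n+1) by omega),
      base_odd, base_even, base_even]
    push_cast
    have htrig2 : Real.sin (((n:ℝ) + 1 + 1) * x)
        = 2 * Real.cos x * Real.sin (((n:ℝ)+1) * x) - Real.sin ((n:ℝ) * x) := by
      have h := trig x ((n:ℝ) + 1)
      have h' : Real.sin (((n:ℝ)+1-1)*x) = Real.sin ((n:ℝ)*x) := by norm_num
      rw [h'] at h
      linarith
    rw [htrig2]
    linear_combination key_odd (Rx x) (Real.sqrt 2) (Real.cos x)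
      (Real.sin ((n:ℝ)*x)) (Real.sin (((n:ℝ)+1)*x)) ε μ hs hs0 hst hμ2
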